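/- For all real numbers ε and x with 0 < ε < 1/2 and 0 < x ≤ 1 - ε, the inequality log(x+ε)/log(x) ≤ (1-ε)² holds. -/

import Mathlib

open Real

/-- Quadratic upper bound for log near 1: `log (1-u) ≤ -u - u²/2` for `u ∈ [0, 1/2]`. -/
lemma lemA {u : ℝ} (h0 : 0 ≤ u) (h1 : u ≤ 1/2) : Real.log (1 - u) ≤ -u - u^2/2 := by
  have h1u : 0 < 1 - u := by linarith
  rw [show -u - u^2/2 = -(u + u^2/2) by ring]
  rw [Real.log_le_iff_le_exp h1u]
  have ht0 : 0 ≤ u + u^2/2 := by positivity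
  have ht1 : u + u^2/2 ≤ 1 := by nlinarith
  have hb := Real.exp_bound' ht0 ht1 (n := 3) (by norm_num)
  simp only [Finset.sum_range_succ, Finset.sum_range_zero] at hb
  norm_num [Nat.factorial] at hb
  have hb2 : Real.exp (u + u^2/2) ≤
      1 + (u + u^2/2) + (u + u^2/2)^2/2 + (2/9) * (u + u^2/2)^3 := by linarith
  have h1u' : (0:ℝ) ≤ 1 - u := by linarith
  have hkey : (1 - u) * Real.exp (u + u^2/2) ≤ 1 := by
    nlinarith [mul_le_mul_of_nonneg_left hb2 h1u', pow_nonneg h0 3, pow_nonneg h0 4,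
      pow_nonneg h0 5, pow_nonneg h0 6, pow_nonneg h0 7]
  rw [Real.exp_neg, ← one_div, le_div_iff₀ (Real.exp_pos _)]
  exact hkey

/-- Tangent-line bound for the maximum of `(1-s) * s^m`:
if `a + δ = 1` and `m = a/δ`, then `(1-s) * s^m ≤ δ * a^m` for `s ∈ (0,1]`. -/
lemma lemB {a δ s : ℝ} (ha : 0 < a) (hδ : 0 < δ) (hsum : a + δ = 1)
    (hs0 : 0 < s) (hs1 : s ≤ 1) :
    (1 - s) * s ^ (a/δ) ≤ δ * a ^ (a/δ) := by
  set m := a/δ with hm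
  have hm0 : 0 < m := div_pos ha hδ
  have hδm : δ * m = a := by rw [hm]; field_simp
  have hlog : 1 - s/a ≤ Real.log (a/s) := by
    have h := Real.log_le_sub_one_of_pos (show (0:ℝ) < s/a by positivity)
    have : Real.log (a/s) = -Real.log (s/a) := by
      rw [Real.log_div ha.ne' hs0.ne', Real.log_div hs0.ne' ha.ne']; ring
    rw [this]; linarith
  have hexp : 1 + m * Real.log (a/s) ≤ (a/s) ^ m := by
    rw [Real.rpow_def_of_pos (by positivity)]
    have h := Real.add_one_le_exp (Real.log (a/s) * m)
    linarith [h]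
  have key : 1 - s ≤ δ * (a/s) ^ m := by
    have h2 : 1 + m * (1 - s/a) ≤ (a/s) ^ m := by
      have := mul_le_mul_of_nonneg_left hlog hm0.le
      linarith [hexp]
    have h3 : δ * (1 + m * (1 - s/a)) ≤ δ * (a/s) ^ m :=
      mul_le_mul_of_nonneg_left h2 hδ.le
    have h4 : δ * (1 + m * (1 - s/a)) = δ + a - s := by
      have : a * (s/a) = s := by field_simp
      nlinarith [hδm, this]
    linarith [h3, h4.symm.le, hsum]
  have hsm : (0:ℝ) ≤ s ^ m := Real.rpow_nonneg hs0.le m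
  have h5 : (1 - s) * s ^ m ≤ δ * (a/s) ^ m * s ^ m :=
    mul_le_mul_of_nonneg_right key hsm
  have h6 : (a/s) ^ m * s ^ m = a ^ m := by
    rw [← Real.mul_rpow (by positivity) hs0.le, div_mul_cancel₀ _ hs0.ne']
  calc (1 - s) * s ^ m ≤ δ * (a/s) ^ m * s ^ m := h5
    _ = δ * a ^ m := by rw [mul_assoc, h6]

set_option maxHeartbeats 2000000 in
theorem stmt1 (ε x : ℝ) (hε : 0 < ε) (hε2 : ε < 1/2) (hx : 0 < x) (hxe : x ≤ 1 - ε) :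
    Real.log (x + ε) / Real.log x ≤ (1 - ε)^2 := by
  have hx1 : x < 1 := by linarith
  have hlx : Real.log x < 0 := Real.log_neg hx hx1
  rw [div_le_iff_of_neg hlx]
  set a : ℝ := (1 - ε)^2 with ha_def
  set δ : ℝ := 1 - a with hδ_def
  have h1ε : 0 < 1 - ε := by linarith
  have ha0 : 0 < a := by positivity
  have hδε : δ = ε * (2 - ε) := by rw [hδ_def, ha_def]; ring
  have hδ0 : 0 < δ := by rw [hδε]; nlinarith
  set m : ℝ := a / δ with hm_def
  have hm0 : 0 < m := div_pos ha0 hδ0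
  have hpos : (0:ℝ) < ε * (2 - ε) := by nlinarith
  have hm_eq : m * (ε * (2 - ε)) = (1 - ε)^2 := by
    rw [hm_def, hδε, div_mul_cancel₀ _ hpos.ne']
  -- key estimate: δ * a ^ m ≤ ε
  have hC : δ * a ^ m ≤ ε := by
    have hA1 : Real.log (1 - ε) ≤ -ε - ε^2/2 := lemA hε.le hε2.le
    have hA2 : Real.log (1 - ε/2) ≤ -(ε/2) - (ε/2)^2/2 := lemA (by linarith) (by linarith)
    have hlog2 : Real.log 2 < 0.6931471808 := Real.log_two_lt_d9
    have h2e : Real.log (2 - ε) ≤ 0.6931471808 - ε/2 - ε^2/8 := by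
      have he : (2 - ε) = 2 * (1 - ε/2) := by ring
      rw [he, Real.log_mul (by norm_num) (by norm_num; linarith)]
      nlinarith [hA2, hlog2]
    -- polynomial inequality
    have key2' : (0.6931471808 - ε/2 - ε^2/8) * (2 - ε) ≤ (2 + ε) * (1 - ε)^2 := by
      nlinarith [sq_nonneg ε, sq_nonneg (1 - ε), sq_nonneg (1 - 2*ε), sq_nonneg (ε - 1/2),
        mul_pos hε (mul_pos hε hε)]
    have hmain : 0.6931471808 - ε/2 - ε^2/8 ≤ (2*ε + ε^2) * m := by
      have hmul : (0.6931471808 - ε/2 - ε^2/8) * (ε * (2 - ε)) ≤ (2*ε + ε^2) * (1 - ε)^2 := by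
        nlinarith [mul_le_mul_of_nonneg_left key2' hε.le]
      rw [← hm_eq] at hmul
      have := (mul_le_mul_iff_of_pos_right hpos).mp (by linarith [hmul] : (0.6931471808 - ε/2 - ε^2/8) * (ε * (2 - ε)) ≤ (2*ε + ε^2) * m * (ε * (2 - ε)))
      linarith [this]
    have hstep : Real.log a * m ≤ Real.log (1 / (2 - ε)) := by
      have hla : Real.log a = 2 * Real.log (1 - ε) := by
        rw [ha_def, Real.log_pow]; push_cast; ring
      have h1 : Real.log a * m ≤ (-2*ε - ε^2) * m := by
        rw [hla]
        have : 2 * Real.log (1 - ε) ≤ -2*ε - ε^2 := by linarith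
        exact mul_le_mul_of_nonneg_right this hm0.le
      have h2 : Real.log (1 / (2 - ε)) = -Real.log (2 - ε) := by
        rw [one_div, Real.log_inv]
      rw [h2]
      nlinarith [h1, hmain, h2e]
    have haεm : a ^ m ≤ 1 / (2 - ε) := by
      rw [Real.rpow_def_of_pos ha0]
      calc Real.exp (Real.log a * m) ≤ Real.exp (Real.log (1 / (2 - ε))) :=
            Real.exp_le_exp.mpr hstep
        _ = 1 / (2 - ε) := Real.exp_log (one_div_pos.mpr (by linarith))
    have : δ * a ^ m ≤ δ * (1 / (2 - ε)) := mul_le_mul_of_nonneg_left haεm hδ0.le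
    have hδdiv : δ * (1 / (2 - ε)) = ε := by
      rw [hδε, mul_one_div, mul_div_assoc, div_self (show (2:ℝ) - ε ≠ 0 by linarith),
        mul_one]
    exact le_trans this hδdiv.le
  -- substitution s = x^δ
  set s : ℝ := x ^ δ with hs_def
  have hs0 : 0 < s := Real.rpow_pos_of_pos hx δ
  have hs1 : s ≤ 1 := Real.rpow_le_one hx.le (by linarith) hδ0.le
  have hδm : δ * m = a := by rw [hm_def]; field_simp
  have hxa : x ^ a = s ^ m := by
    rw [hs_def, ← Real.rpow_mul hx.le, hδm]
  have hxx : x = s ^ m * s := by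
    have h1 : δ * (m + 1) = 1 := by rw [mul_add, hδm, mul_one]; linarith [hδ_def]
    calc x = x ^ (1:ℝ) := (Real.rpow_one x).symm
      _ = x ^ (δ * (m + 1)) := by rw [h1]
      _ = (x ^ δ) ^ (m + 1) := Real.rpow_mul hx.le δ (m+1)
      _ = s ^ m * s := by rw [← hs_def, Real.rpow_add hs0, Real.rpow_one]
  have hB := lemB ha0 hδ0 (by linarith [hδ_def]) hs0 hs1
  rw [← hm_def] at hB
  -- conclude x ^ a ≤ x + ε
  have hkey : x ^ a ≤ x + ε := by
    rw [hxa]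
    nlinarith [hB, hC, hxx.symm.le, hxx.le]
  calc (1 - ε)^2 * Real.log x = Real.log (x ^ a) := by
        rw [Real.log_rpow hx, ha_def]
    _ ≤ Real.log (x + ε) := Real.log_le_log (Real.rpow_pos_of_pos hx a) hkey
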